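/- arXiv:1710.01990 — 6 statements merged into one kernel-verified Lean document; each statement's English description precedes it below -/
import Mathlib

section
/- For integers n ≥ 2 and 1 ≤ k ≤ n−1, the k-circulant digraph C_n(1,…,k) is ⌈k/2⌉-robust. -/
/-- In-neighbor set of vertex `j` in the `k`-circulant digraph `C_n(1,…,k)`:
`K_j = {j-1, j-2, …, j-k}` (mod `n`). -/
def circInNbrs (n k : ℕ) (j : ZMod n) : Finset (ZMod n) :=
  (Finset.Icc 1 k).image fun a : ℕ => j - (a : ZMod n)

/-- A nonempty subset `S` is `r`-reachable if some `i ∈ S` has at least `r`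
in-neighbors outside of `S`. -/
def circRReachable (n k r : ℕ) (S : Finset (ZMod n)) : Prop :=
  ∃ i ∈ S, r ≤ ((circInNbrs n k i) \ S).card

/-- The `k`-circulant digraph on `n` nodes is `r`-robust: for every pair of
nonempty disjoint subsets of the vertex set, at least one is `r`-reachable. -/
def circRRobust (n k r : ℕ) : Prop :=
  ∀ S1 S2 : Finset (ZMod n), S1.Nonempty → S2.Nonempty → Disjoint S1 S2 →
    circRReachable n k r S1 ∨ circRReachable n k r S2

lemma circInNbrs_card (n k : ℕ) (hn : 2 ≤ n) (hk2 : k ≤ n - 1) (j : ZMod n) :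
    (circInNbrs n k j).card = k := by
  haveI : NeZero n := ⟨by omega⟩
  rw [circInNbrs, Finset.card_image_of_injOn, Nat.card_Icc]
  · omega
  · intro x hx y hy hxy
    simp only [Finset.mem_coe, Finset.mem_Icc] at hx hy
    have h : (x : ZMod n) = (y : ZMod n) := sub_right_injective hxy
    have hx' : ((x : ZMod n)).val = x := ZMod.val_cast_of_lt (by omega)
    have hy' : ((y : ZMod n)).val = y := ZMod.val_cast_of_lt (by omega)
    rw [← hx', ← hy', h]

/-- Key counting lemma: if `(a, b) ∈ S1 × S2` minimizes the cyclic gap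
`(b - a).val` over `S1 × S2`, then the number of in-neighbors of `a` outside
`S1` plus the number of in-neighbors of `b` outside `S2` is at least `k`. -/
lemma circ_key (n k : ℕ) (hn : 2 ≤ n) (hk2 : k ≤ n - 1)
    (S1 S2 : Finset (ZMod n)) (hdisj : Disjoint S1 S2)
    (a b : ZMod n) (ha : a ∈ S1) (hb : b ∈ S2)
    (hmin : ∀ x ∈ S1, ∀ y ∈ S2, (b - a).val ≤ (y - x).val) :
    k ≤ ((circInNbrs n k a) \ S1).card + ((circInNbrs n k b) \ S2).card := by
  haveI : NeZero n := ⟨by omega⟩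
  set g := (b - a).val with hg
  have hglt : g < n := ZMod.val_lt _
  have hba : (g : ZMod n) = b - a := by
    simp [hg, ZMod.natCast_val, ZMod.cast_id]
  have hg1 : 1 ≤ g := by
    rcases Nat.eq_zero_or_pos g with h | h
    · exfalso
      have hz : b - a = 0 := (ZMod.val_eq_zero (b - a)).mp h
      have : b = a := by linear_combination hz
      exact Finset.disjoint_left.mp hdisj ha (this ▸ hb)
    · exact h
  -- predecessors of b at distance ≤ g are not in S2
  have hnot : ∀ t : ℕ, 1 ≤ t → t ≤ g → b - (t : ZMod n) ∉ S2 := by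
    intro t h1 h2 hmem
    have hmin' := hmin a ha (b - t) hmem
    have heq : (b - (t : ZMod n)) - a = ((g - t : ℕ) : ZMod n) := by
      rw [Nat.cast_sub h2, hba]; ring
    rw [heq, ZMod.val_cast_of_lt (by omega)] at hmin'
    omega
  -- in-neighbors of `b` inside `S2` are in-neighbors of `a` outside `S1`
  have hsub : (circInNbrs n k b) ∩ S2 ⊆ (circInNbrs n k a) \ S1 := by
    intro x hx
    rw [Finset.mem_inter] at hx
    obtain ⟨hx1, hx2⟩ := hx
    rw [circInNbrs, Finset.mem_image] at hx1
    obtain ⟨t, ht, rfl⟩ := hx1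
    rw [Finset.mem_Icc] at ht
    have htg : g < t := by
      by_contra hc
      exact hnot t ht.1 (by omega) hx2
    rw [Finset.mem_sdiff]
    constructor
    · rw [circInNbrs, Finset.mem_image]
      refine ⟨t - g, Finset.mem_Icc.mpr ⟨by omega, by omega⟩, ?_⟩
      rw [Nat.cast_sub (by omega), hba]; ring
    · exact fun hS1 => Finset.disjoint_left.mp hdisj hS1 hx2
  have h1 : ((circInNbrs n k b) ∩ S2).card ≤ ((circInNbrs n k a) \ S1).card :=
    Finset.card_le_card hsub
  have h2 : ((circInNbrs n k b) ∩ S2).card + ((circInNbrs n k b) \ S2).card = k := by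
    rw [Finset.card_inter_add_card_sdiff, circInNbrs_card n k hn hk2]
  omega

/-- The `k`-circulant digraph `C_n(1,…,k)` is `⌈k/2⌉`-robust. -/
theorem circulant_is_ceil_half_k_robust (n k : ℕ) (hn : 2 ≤ n) (hk1 : 1 ≤ k)
    (hk2 : k ≤ n - 1) : circRRobust n k ((k + 1) / 2) := by
  intro S1 S2 h1 h2 hdisj
  haveI : NeZero n := ⟨by omega⟩
  obtain ⟨p, hp, hpmin⟩ := Finset.exists_min_image (S1 ×ˢ S2)
    (fun p => (p.2 - p.1).val) (h1.product h2)
  rw [Finset.mem_product] at hp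
  have key := circ_key n k hn hk2 S1 S2 hdisj p.1 p.2 hp.1 hp.2
    (fun x hx y hy => hpmin (x, y) (Finset.mem_product.mpr ⟨hx, hy⟩))
  by_cases hA : (k + 1) / 2 ≤ ((circInNbrs n k p.1) \ S1).card
  · exact Or.inl ⟨p.1, hp.1, hA⟩
  · exact Or.inr ⟨p.2, hp.2, by omega⟩
end

section
/- Let D be a digraph on n ≥ 2 nodes, let r be a nonnegative integer and s a positive integer with 1 ≤ r+s−1 ≤ ⌈n/2⌉. If D is (r+s−1)-robust, then D is (r,s)-robust. -/
variable {V : Type*} [Fintype V] [DecidableEq V]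

/-- In-neighbor set of node `j` in the digraph on `V` with edge relation `E`:
`K_j = {i ∈ V : (i,j) ∈ E}`. -/
def inNbrs (E : V → V → Prop) [DecidableRel E] (j : V) : Finset V :=
  Finset.univ.filter fun i => E i j

/-- A nonempty subset `S` is `r`-reachable if some `i ∈ S` has at least `r`
in-neighbors outside of `S`. -/
def rReachable (E : V → V → Prop) [DecidableRel E] (r : ℕ) (S : Finset V) : Prop :=
  ∃ i ∈ S, r ≤ ((inNbrs E i) \ S).card

/-- The digraph is `r`-robust: for every pair of nonempty disjoint subsets of
the vertex set, at least one is `r`-reachable. -/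
def rRobust (E : V → V → Prop) [DecidableRel E] (r : ℕ) : Prop :=
  ∀ S1 S2 : Finset V, S1.Nonempty → S2.Nonempty → Disjoint S1 S2 →
    rReachable E r S1 ∨ rReachable E r S2

/-- `X^r_S = {i ∈ S : |K_i \ S| ≥ r}`. -/
def xSet (E : V → V → Prop) [DecidableRel E] (r : ℕ) (S : Finset V) : Finset V :=
  S.filter fun i => r ≤ ((inNbrs E i) \ S).card

/-- The digraph is `(r,s)`-robust: for every pair of nonempty disjoint subsets
`S1, S2` of the vertex set, `|X^r_{S1}| = |S1|`, or `|X^r_{S2}| = |S2|`, or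
`|X^r_{S1}| + |X^r_{S2}| ≥ s`. -/
def rsRobust (E : V → V → Prop) [DecidableRel E] (r s : ℕ) : Prop :=
  ∀ S1 S2 : Finset V, S1.Nonempty → S2.Nonempty → Disjoint S1 S2 →
    (xSet E r S1).card = S1.card ∨ (xSet E r S2).card = S2.card ∨
      s ≤ (xSet E r S1).card + (xSet E r S2).card

/-- If a digraph on `n ≥ 2` nodes is `(r+s-1)`-robust, where `r ≥ 0`, `s ≥ 1`
and `1 ≤ r+s-1 ≤ ⌈n/2⌉`, then it is `(r,s)`-robust. -/
theorem robust_imp_rs_robust (E : V → V → Prop) [DecidableRel E] (n r s : ℕ)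
    (hn : 2 ≤ n) (hcard : Fintype.card V = n) (hs : 1 ≤ s)
    (hlow : 1 ≤ r + s - 1) (hhigh : r + s - 1 ≤ (n + 1) / 2)
    (hrob : rRobust E (r + s - 1)) : rsRobust E r s := by
  intro S1 S2 h1 h2 hdis
  by_contra h
  push_neg at h
  obtain ⟨hx1, hx2, hlt⟩ := h
  have key : ∀ S : Finset V, (xSet E r S).card ≠ S.card → (S \ xSet E r S).Nonempty := by
    intro S hne
    rw [Finset.sdiff_nonempty]
    intro hsub
    exact hne (congrArg Finset.card (Finset.Subset.antisymm (Finset.filter_subset _ _) hsub))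
  have h1' := key S1 hx1
  have h2' := key S2 hx2
  have hdis' : Disjoint (S1 \ xSet E r S1) (S2 \ xSet E r S2) :=
    hdis.mono (Finset.sdiff_subset) (Finset.sdiff_subset)
  have main : ∀ S : Finset V, (xSet E r S).card + 1 ≤ s →
      ¬ rReachable E (r + s - 1) (S \ xSet E r S) := by
    intro S hcards ⟨i, hi, hci⟩
    obtain ⟨hiS, hinx⟩ := Finset.mem_sdiff.mp hi
    have hsub : inNbrs E i \ (S \ xSet E r S) ⊆ (inNbrs E i \ S) ∪ xSet E r S := by
      intro x hx
      simp only [Finset.mem_sdiff, Finset.mem_union, not_and, not_not] at hx ⊢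
      tauto
    have hcle : (inNbrs E i \ (S \ xSet E r S)).card ≤
        (inNbrs E i \ S).card + (xSet E r S).card :=
      le_trans (Finset.card_le_card hsub) (Finset.card_union_le _ _)
    have hri : r ≤ ((inNbrs E i) \ S).card := by omega
    exact hinx (Finset.mem_filter.mpr ⟨hiS, hri⟩)
  rcases hrob _ _ h1' h2' hdis' with hr | hr
  · exact main S1 (by omega) hr
  · exact main S2 (by omega) hr
end

section
/- For integers n ≥ 2 and 1 ≤ k ≤ n−1 with k odd, the k-circulant digraph C_n(1,…,k) is (⌊(k+3)/4⌋, ⌊(k+3)/4⌋)-robust. -/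
/-- `X^r_S = {i ∈ S : |K_i \ S| ≥ r}` in the `k`-circulant digraph. -/
def circXSet (n k r : ℕ) (S : Finset (ZMod n)) : Finset (ZMod n) :=
  S.filter fun i => r ≤ ((circInNbrs n k i) \ S).card

/-- The `k`-circulant digraph on `n` nodes is `(r,s)`-robust: for every pair of
nonempty disjoint subsets `S1, S2` of the vertex set, `|X^r_{S1}| = |S1|`, or
`|X^r_{S2}| = |S2|`, or `|X^r_{S1}| + |X^r_{S2}| ≥ s`. -/
def circRSRobust (n k r s : ℕ) : Prop :=
  ∀ S1 S2 : Finset (ZMod n), S1.Nonempty → S2.Nonempty → Disjoint S1 S2 →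
    (circXSet n k r S1).card = S1.card ∨ (circXSet n k r S2).card = S2.card ∨
      s ≤ (circXSet n k r S1).card + (circXSet n k r S2).card

/-- Shifting the window by one: `W_{j+1} ⊆ {j} ∪ W_j`. -/
lemma circInNbrs_succ_subset (n k : ℕ) (hk1 : 1 ≤ k) (j : ZMod n) :
    circInNbrs n k (j + 1) ⊆ insert j (circInNbrs n k j) := by
  intro x hx
  simp only [circInNbrs, Finset.mem_image, Finset.mem_Icc] at hx
  obtain ⟨a, ⟨ha1, hak⟩, rfl⟩ := hx
  rcases eq_or_lt_of_le ha1 with h | h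
  · subst h
    simp [Finset.mem_insert]
  · apply Finset.mem_insert_of_mem
    simp only [circInNbrs, Finset.mem_image, Finset.mem_Icc]
    refine ⟨a - 1, ⟨by omega, by omega⟩, ?_⟩
    have : ((a - 1 : ℕ) : ZMod n) = (a : ZMod n) - 1 := by
      push_cast [Nat.cast_sub ha1]; ring
    rw [this]; ring

/-- For odd `k`, the `k`-circulant digraph `C_n(1,…,k)` is
`(⌊(k+3)/4⌋, ⌊(k+3)/4⌋)`-robust. -/
theorem circulant_odd_k_rs_robust (n k : ℕ) (hn : 2 ≤ n) (hk1 : 1 ≤ k)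
    (hk2 : k ≤ n - 1) (hkodd : Odd k) :
    circRSRobust n k ((k + 3) / 4) ((k + 3) / 4) := by
  classical
  haveI : NeZero n := ⟨by omega⟩
  set r := (k + 3) / 4 with hrdef
  have hr1 : 1 ≤ r := by omega
  have hr2 : 3 * r ≤ k + 2 := by omega
  intro S1 S2 h1 h2 hdisj
  by_cases hX1 : (circXSet n k r S1).card = S1.card
  · exact Or.inl hX1
  by_cases hX2 : (circXSet n k r S2).card = S2.card
  · exact Or.inr (Or.inl hX2)
  right; right
  have hcardW : ∀ j : ZMod n, (circInNbrs n k j).card = k :=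
    circInNbrs_card n k hn hk2
  -- extraction of a "deep" vertex from a set whose X-set is proper
  have extract : ∀ S : Finset (ZMod n), (circXSet n k r S).card ≠ S.card →
      ∃ a ∈ S, k + 1 ≤ ((circInNbrs n k a) ∩ S).card + r := by
    intro S hne
    have hsubX : circXSet n k r S ⊆ S := Finset.filter_subset _ _
    have hss : circXSet n k r S ⊂ S :=
      hsubX.ssubset_of_ne (fun h => hne (congrArg Finset.card h))
    obtain ⟨a, haS, haX⟩ := (Finset.ssubset_iff_of_subset hsubX).mp hss
    refine ⟨a, haS, ?_⟩
    rw [circXSet, Finset.mem_filter] at haX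
    push_neg at haX
    have hlt := haX haS
    have hsum := Finset.card_inter_add_card_sdiff (circInNbrs n k a) S
    rw [hcardW a] at hsum
    omega
  obtain ⟨a, haS1, hafull⟩ := extract S1 hX1
  obtain ⟨b, hbS2, hbfull⟩ := extract S2 hX2
  -- the window of b has few S1 elements
  have hb1 : ((circInNbrs n k b) ∩ S1).card + 1 ≤ r := by
    have hdisj' : Disjoint ((circInNbrs n k b) ∩ S1) ((circInNbrs n k b) ∩ S2) :=
      hdisj.mono inf_le_right inf_le_right
    have hsub : ((circInNbrs n k b) ∩ S1) ∪ ((circInNbrs n k b) ∩ S2) ⊆ circInNbrs n k b :=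
      Finset.union_subset (Finset.inter_subset_left) (Finset.inter_subset_left)
    have := Finset.card_le_card hsub
    rw [Finset.card_union_of_disjoint hdisj', hcardW b] at this
    omega
  -- the walking function
  set g : ℕ → ℕ := fun t => ((circInNbrs n k (b + (t : ZMod n))) ∩ S1).card with hgdef
  have hg0 : g 0 + 1 ≤ r := by
    simpa [hgdef] using hb1
  have hgT : ∃ t : ℕ, k + 1 ≤ g t + r := by
    refine ⟨(a - b).val, ?_⟩
    have : (b + (((a - b).val : ℕ) : ZMod n)) = a := by
      rw [ZMod.natCast_zmod_val]; ring
    simpa [hgdef, this] using hafull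
  -- step lemmas
  have hstep : ∀ t : ℕ, g (t + 1) ≤ g t + 1 ∧ (g t < g (t + 1) → (b + (t : ZMod n)) ∈ S1) := by
    intro t
    have hjeq : (b + ((t + 1 : ℕ) : ZMod n)) = (b + (t : ZMod n)) + 1 := by
      push_cast; ring
    have hgg : g (t + 1) = ((circInNbrs n k ((b + (t : ZMod n)) + 1)) ∩ S1).card := by
      simp only [hgdef]
      rw [hjeq]
    have hWsub := circInNbrs_succ_subset n k hk1 (b + (t : ZMod n))
    have hsub2 : (circInNbrs n k ((b + (t : ZMod n)) + 1)) ∩ S1 ⊆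
        insert (b + (t : ZMod n)) ((circInNbrs n k (b + (t : ZMod n))) ∩ S1) := by
      intro x hx
      rw [Finset.mem_inter] at hx
      rcases Finset.mem_insert.mp (hWsub hx.1) with h | h
      · exact h ▸ Finset.mem_insert_self _ _
      · exact Finset.mem_insert_of_mem (Finset.mem_inter.mpr ⟨h, hx.2⟩)
    constructor
    · have h1 := Finset.card_le_card hsub2
      have h2 := Finset.card_insert_le (b + (t : ZMod n)) ((circInNbrs n k (b + (t : ZMod n))) ∩ S1)
      have h3 : g t = ((circInNbrs n k (b + (t : ZMod n))) ∩ S1).card := rfl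
      omega
    · intro hlt
      by_contra hjS1
      have hsub3 : (circInNbrs n k ((b + (t : ZMod n)) + 1)) ∩ S1 ⊆
          (circInNbrs n k (b + (t : ZMod n))) ∩ S1 := by
        intro x hx
        rcases Finset.mem_insert.mp (hsub2 hx) with h | h
        · exact absurd (h ▸ (Finset.mem_inter.mp hx).2) hjS1
        · exact h
      have h1 := Finset.card_le_card hsub3
      have h3 : g t = ((circInNbrs n k (b + (t : ZMod n))) ∩ S1).card := rfl
      omega
  -- for each level, a first-crossing vertex in X1
  have hex : ∀ v : ℕ, ∃ x : ZMod n, (v ∈ Finset.Icc r (k - r + 1)) →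
      x ∈ circXSet n k r S1 ∧ ((circInNbrs n k x) ∩ S1).card + 1 = v := by
    intro v
    by_cases hv : v ∈ Finset.Icc r (k - r + 1)
    · rw [Finset.mem_Icc] at hv
      have hTv : ∃ t, v ≤ g t := by
        obtain ⟨t, ht⟩ := hgT
        exact ⟨t, by omega⟩
      set t₀ := Nat.find hTv with ht₀def
      have hspec : v ≤ g t₀ := Nat.find_spec hTv
      have hpos : t₀ ≠ 0 := by
        intro h
        rw [h] at hspec
        omega
      obtain ⟨u, hu⟩ := Nat.exists_eq_succ_of_ne_zero hpos
      have hmin : ¬ v ≤ g u := by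
        have := Nat.find_min hTv (m := u) (by omega)
        exact this
      have hsu1 := (hstep u).1
      rw [hu] at hspec
      simp only [Nat.succ_eq_add_one] at hspec
      have hgu1 : g (u + 1) = v ∧ g u + 1 = v := by omega
      have hmemS1 : (b + (u : ZMod n)) ∈ S1 := (hstep u).2 (by omega)
      refine ⟨b + (u : ZMod n), fun _ => ⟨?_, hgu1.2⟩⟩
      rw [circXSet, Finset.mem_filter]
      refine ⟨hmemS1, ?_⟩
      have hsum := Finset.card_inter_add_card_sdiff (circInNbrs n k (b + (u : ZMod n))) S1
      rw [hcardW] at hsum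
      have : ((circInNbrs n k (b + (u : ZMod n))) ∩ S1).card + 1 = v := hgu1.2
      omega
    · exact ⟨0, fun h => absurd h hv⟩
  choose F hF using hex
  have hcard : (Finset.Icc r (k - r + 1)).card ≤ (circXSet n k r S1).card := by
    apply Finset.card_le_card_of_injOn F (fun v hv => (hF v hv).1)
    intro v hv v' hv' hEq
    have h1 := (hF v hv).2
    have h2 := (hF v' hv').2
    rw [hEq] at h1
    omega
  rw [Nat.card_Icc] at hcard
  omega
end

section
/- For integers n ≥ 2 and 1 ≤ k ≤ n−1, for every partition of the vertex set of the k-circulant digraph C_n(1,…,k) into nonempty disjoint subsets S1 and S2 with S1 ∪ S2 equal to the whole vertex set, there exists a vertex i ∈ S1 with at least ⌈k/2⌉ in-neighbors in S2, or a vertex j ∈ S2 with at least ⌈k/2⌉ in-neighbors in S1. -/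
lemma natCast_inj_zmod {n a b : ℕ} (ha : a < n) (hb : b < n)
    (h : (a : ZMod n) = (b : ZMod n)) : a = b := by
  haveI : NeZero n := ⟨by omega⟩
  have := congrArg ZMod.val h
  rwa [ZMod.val_natCast_of_lt ha, ZMod.val_natCast_of_lt hb] at this

lemma circ_key_s5 (n k : ℕ) (hn : 2 ≤ n) (hk1 : 1 ≤ k) (hk2 : k ≤ n - 1)
    (S1 S2 : Finset (ZMod n)) (hdisj : Disjoint S1 S2)
    (hcover : ∀ v : ZMod n, v ∈ S1 ∨ v ∈ S2) (j : ZMod n)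
    (hj : j ∈ S1) (hj1 : j - 1 ∈ S2) :
    (∃ i ∈ S1, (k + 1) / 2 ≤ ((circInNbrs n k i) ∩ S2).card) ∨
      (∃ j ∈ S2, (k + 1) / 2 ≤ ((circInNbrs n k j) ∩ S1).card) := by
  by_cases hc : (k + 1) / 2 ≤ ((circInNbrs n k j) ∩ S2).card
  · exact Or.inl ⟨j, hj, hc⟩
  · right
    refine ⟨j - 1, hj1, ?_⟩
    have hsum : ((circInNbrs n k j) ∩ S1).card + ((circInNbrs n k j) ∩ S2).card = k := by
      rw [← Finset.card_union_of_disjoint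
          (hdisj.mono Finset.inter_subset_right Finset.inter_subset_right)]
      rw [show (circInNbrs n k j ∩ S1) ∪ (circInNbrs n k j ∩ S2) = circInNbrs n k j from ?_,
        circInNbrs_card n k hn hk2 j]
      ext x
      simp only [Finset.mem_union, Finset.mem_inter]
      constructor
      · rintro (⟨h, _⟩ | ⟨h, _⟩) <;> exact h
      · intro hx
        rcases hcover x with h | h
        · exact Or.inl ⟨hx, h⟩
        · exact Or.inr ⟨hx, h⟩
    have hsub : (circInNbrs n k j) ∩ S1 ⊆ (circInNbrs n k (j - 1)) ∩ S1 := by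
      intro x hx
      rw [Finset.mem_inter] at hx ⊢
      obtain ⟨hxW, hxS1⟩ := hx
      refine ⟨?_, hxS1⟩
      rw [circInNbrs, Finset.mem_image] at hxW ⊢
      obtain ⟨a, haI, rfl⟩ := hxW
      rw [Finset.mem_Icc] at haI
      have ha1 : a ≠ 1 := by
        rintro rfl
        rw [Nat.cast_one] at hxS1
        exact Finset.disjoint_left.mp hdisj hxS1 hj1
      refine ⟨a - 1, Finset.mem_Icc.mpr ⟨by omega, by omega⟩, ?_⟩
      have : ((a - 1 : ℕ) : ZMod n) = (a : ZMod n) - 1 := by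
        push_cast [Nat.cast_sub (by omega : 1 ≤ a)]
        ring
      rw [this]
      ring
    have := Finset.card_le_card hsub
    omega

lemma circ_boundary (n : ℕ) (hn : 2 ≤ n) (S1 S2 : Finset (ZMod n))
    (hdisj : Disjoint S1 S2) (hcover : ∀ v : ZMod n, v ∈ S1 ∨ v ∈ S2)
    (h1 : S1.Nonempty) (h2 : S2.Nonempty) :
    ∃ v : ZMod n, (v ∈ S1 ∧ v - 1 ∈ S2) ∨ (v ∈ S2 ∧ v - 1 ∈ S1) := by
  haveI : NeZero n := ⟨by omega⟩
  by_contra hcon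
  push_neg at hcon
  have step1 : ∀ v : ZMod n, v ∈ S1 → v - 1 ∈ S1 := by
    intro v hv
    rcases hcover (v - 1) with h | h
    · exact h
    · exact ((hcon v).1 hv h).elim
  obtain ⟨x, hx⟩ := h1
  obtain ⟨y, hy⟩ := h2
  have hall : ∀ m : ℕ, x - (m : ZMod n) ∈ S1 := by
    intro m
    induction m with
    | zero => simpa using hx
    | succ m ih =>
      have := step1 _ ih
      have heq : x - ((m + 1 : ℕ) : ZMod n) = x - (m : ZMod n) - 1 := by
        push_cast; ring
      rw [heq]
      exact this
  have hyS1 : y ∈ S1 := by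
    have h := hall (x - y).val
    rw [ZMod.natCast_val, ZMod.cast_id] at h
    simpa using h
  exact Finset.disjoint_left.mp hdisj hyS1 hy

/-- For every partition of the vertex set of `C_n(1,…,k)` into nonempty disjoint
subsets `S1` and `S2` covering all vertices, some vertex of `S1` has at least
`⌈k/2⌉` in-neighbors in `S2`, or some vertex of `S2` has at least `⌈k/2⌉`
in-neighbors in `S1`. -/
theorem circulant_partition_reachable (n k : ℕ) (hn : 2 ≤ n) (hk1 : 1 ≤ k)
    (hk2 : k ≤ n - 1) (S1 S2 : Finset (ZMod n))
    (h1 : S1.Nonempty) (h2 : S2.Nonempty) (hdisj : Disjoint S1 S2)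
    (hcover : ∀ v : ZMod n, v ∈ S1 ∨ v ∈ S2) :
    (∃ i ∈ S1, (k + 1) / 2 ≤ ((circInNbrs n k i) ∩ S2).card) ∨
      (∃ j ∈ S2, (k + 1) / 2 ≤ ((circInNbrs n k j) ∩ S1).card) := by
  obtain ⟨v, hv | hv⟩ := circ_boundary n hn S1 S2 hdisj hcover h1 h2
  · exact circ_key_s5 n k hn hk1 hk2 S1 S2 hdisj hcover v hv.1 hv.2
  · exact (circ_key_s5 n k hn hk1 hk2 S2 S1 hdisj.symm
      (fun w => (hcover w).symm) v hv.1 hv.2).symm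
end

section
/- Let n ≥ 2 and 1 ≤ k ≤ n−1, and consider the k-circulant digraph C_n(1,…,k). Let σ be a positive integer with σ ≤ k. Suppose S1 and S2 are nonempty disjoint subsets whose union is the whole vertex set, and suppose S2 is not σ-reachable (i.e., every j ∈ S2 satisfies |K_j \ S2| < σ). Then for every i ∈ S1 there exists an integer b with 0 < b < σ such that i+b ∈ S2 and the vertices i+1, i+2, …, i+b−1 all lie in S1 (all arithmetic mod n). -/
/-- If `S1, S2` is a partition of the vertex set of `C_n(1,…,k)` into nonempty
disjoint subsets, `1 ≤ σ ≤ k`, and `S2` is not `σ`-reachable, then for every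
`i ∈ S1` there is `b` with `0 < b < σ` such that `i + b ∈ S2` and the vertices
`i+1, …, i+b-1` all lie in `S1`. -/
theorem circulant_exists_nearby_S2 (n k σ : ℕ) (hn : 2 ≤ n) (hk1 : 1 ≤ k)
    (hk2 : k ≤ n - 1) (hσ1 : 1 ≤ σ) (hσk : σ ≤ k)
    (S1 S2 : Finset (ZMod n))
    (h1 : S1.Nonempty) (h2 : S2.Nonempty) (hdisj : Disjoint S1 S2)
    (hcover : ∀ v : ZMod n, v ∈ S1 ∨ v ∈ S2)
    (hnotreach : ∀ j ∈ S2, ((circInNbrs n k j) \ S2).card < σ) :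
    ∀ i ∈ S1, ∃ b : ℕ, 0 < b ∧ b < σ ∧ (i + (b : ZMod n)) ∈ S2 ∧
      ∀ c : ℕ, 0 < c → c < b → (i + (c : ZMod n)) ∈ S1 := by
  haveI : NeZero n := ⟨by omega⟩
  intro i hi
  obtain ⟨j0, hj0⟩ := h2
  have hex : ∃ m : ℕ, (i + (m : ZMod n)) ∈ S2 := by
    refine ⟨(j0 - i).val, ?_⟩
    have : ((j0 - i).val : ZMod n) = j0 - i := ZMod.natCast_rightInverse _
    rw [this]
    simpa using hj0
  classical
  let b := Nat.find hex
  have hbS2 : (i + (b : ZMod n)) ∈ S2 := Nat.find_spec hex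
  have hmin : ∀ c < b, (i + (c : ZMod n)) ∉ S2 := fun c hc => Nat.find_min hex hc
  have hbpos : 0 < b := by
    rcases Nat.eq_zero_or_pos b with h0 | h
    · exfalso
      have := hbS2
      rw [h0] at this
      simp at this
      exact Finset.disjoint_left.mp hdisj hi this
    · exact h
  have hS1c : ∀ c : ℕ, c < b → (i + (c : ZMod n)) ∈ S1 := by
    intro c hc
    rcases hcover (i + (c : ZMod n)) with h | h
    · exact h
    · exact absurd h (hmin c hc)
  have hblt : b < σ := by
    by_contra hge
    push_neg at hge
    set j := i + (b : ZMod n) with hj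
    have hsub : (Finset.Icc 1 σ).image (fun a : ℕ => j - (a : ZMod n)) ⊆
        (circInNbrs n k j) \ S2 := by
      intro x hx
      simp only [Finset.mem_image, Finset.mem_Icc] at hx
      obtain ⟨a, ⟨ha1, ha2⟩, rfl⟩ := hx
      have haleb : a ≤ b := le_trans ha2 hge
      have hxeq : j - (a : ZMod n) = i + ((b - a : ℕ) : ZMod n) := by
        rw [hj, Nat.cast_sub haleb]
        ring
      have hxS1 : j - (a : ZMod n) ∈ S1 := by
        rw [hxeq]
        rcases Nat.eq_zero_or_pos (b - a) with h0 | h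
        · rw [h0]; simpa using hi
        · exact hS1c _ (by omega)
      rw [Finset.mem_sdiff]
      constructor
      · unfold circInNbrs
        exact Finset.mem_image.mpr ⟨a, Finset.mem_Icc.mpr ⟨ha1, le_trans ha2 hσk⟩, rfl⟩
      · exact Finset.disjoint_left.mp hdisj hxS1
    have hcard : ((Finset.Icc 1 σ).image (fun a : ℕ => j - (a : ZMod n))).card = σ := by
      rw [Finset.card_image_of_injOn, Nat.card_Icc]
      · omega
      · intro a ha a' ha' hEq
        simp only [Finset.mem_coe, Finset.mem_Icc] at ha ha'
        have : (a : ZMod n) = (a' : ZMod n) := sub_right_injective hEq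
        have h1 : ((a : ZMod n)).val = a := ZMod.val_natCast_of_lt (by omega)
        have h2 : ((a' : ZMod n)).val = a' := ZMod.val_natCast_of_lt (by omega)
        rw [← h1, ← h2, this]
    have := Finset.card_le_card hsub
    rw [hcard] at this
    exact absurd (lt_of_le_of_lt this (hnotreach j hbS2)) (lt_irrefl σ)
  exact ⟨b, hbpos, hblt, hbS2, fun c _ hc => hS1c c hc⟩
end

section
/- Let n ≥ 2 and 1 ≤ k ≤ n−1, and consider the k-circulant digraph C_n(1,…,k). Let σ be a positive integer. Suppose S1 and S2 are disjoint subsets whose union is the whole vertex set, i ∈ S1, and b is an integer with 0 < b ≤ k such that i+b ∈ S2 and the vertices i, i+1, …, i+b−1 all lie in S1 (arithmetic mod n). If both |K_i \ S1| ≤ σ−1 and |K_{i+b} \ S2| ≤ σ−1, then 2σ ≥ k+2. -/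
/-- If `S1, S2` partition the vertex set of `C_n(1,…,k)`, `i ∈ S1`, `0 < b ≤ k`,
`i + b ∈ S2`, the vertices `i, i+1, …, i+b-1` all lie in `S1`, and both
`|K_i \ S1| ≤ σ - 1` and `|K_{i+b} \ S2| ≤ σ - 1`, then `2σ ≥ k + 2`. -/
theorem circulant_sigma_lower_bound (n k σ : ℕ) (hn : 2 ≤ n) (hk1 : 1 ≤ k)
    (hk2 : k ≤ n - 1) (hσ1 : 1 ≤ σ) (S1 S2 : Finset (ZMod n))
    (hdisj : Disjoint S1 S2) (hcover : ∀ v : ZMod n, v ∈ S1 ∨ v ∈ S2)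
    (i : ZMod n) (hi : i ∈ S1) (b : ℕ) (hb0 : 0 < b) (hbk : b ≤ k)
    (hib : (i + (b : ZMod n)) ∈ S2)
    (hseg : ∀ c : ℕ, c < b → (i + (c : ZMod n)) ∈ S1)
    (hsmall1 : (((circInNbrs n k i) \ S1).card : ℤ) ≤ (σ : ℤ) - 1)
    (hsmall2 : (((circInNbrs n k (i + (b : ZMod n))) \ S2).card : ℤ) ≤ (σ : ℤ) - 1) :
    k + 2 ≤ 2 * σ := by
  haveI : NeZero n := ⟨by omega⟩
  set j : ZMod n := i + (b : ZMod n) with hj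
  set T : Finset (ZMod n) := circInNbrs n k j with hT
  -- cast injectivity on [1,k]
  have hcast : ∀ a ∈ Finset.Icc 1 k, ∀ a' ∈ Finset.Icc 1 k,
      (a : ZMod n) = (a' : ZMod n) → a = a' := by
    intro a ha a' ha' h
    simp only [Finset.mem_Icc] at ha ha'
    have h1 : a < n := by omega
    have h2 : a' < n := by omega
    have := congrArg ZMod.val h
    rwa [ZMod.val_cast_of_lt h1, ZMod.val_cast_of_lt h2] at this
  have hTcard : T.card = k := by
    rw [hT, circInNbrs, Finset.card_image_of_injOn, Nat.card_Icc]
    · omega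
    · intro a ha a' ha' h
      exact hcast a ha a' ha' (sub_right_injective h)
  -- T ∩ S1 ⊆ T \ S2
  have h1 : T ∩ S1 ⊆ T \ S2 := by
    intro v hv
    rw [Finset.mem_inter] at hv
    rw [Finset.mem_sdiff]
    exact ⟨hv.1, fun hv2 => (Finset.disjoint_left.mp hdisj hv.2) hv2⟩
  -- T ∩ S2 ⊆ circInNbrs n k i \ S1
  have h2 : T ∩ S2 ⊆ circInNbrs n k i \ S1 := by
    intro v hv
    rw [Finset.mem_inter] at hv
    obtain ⟨hvT, hvS2⟩ := hv
    rw [hT, circInNbrs, Finset.mem_image] at hvT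
    obtain ⟨a, ha, rfl⟩ := hvT
    simp only [Finset.mem_Icc] at ha
    have hba : b < a := by
      by_contra hle
      push_neg at hle
      have heq : j - (a : ZMod n) = i + ((b - a : ℕ) : ZMod n) := by
        rw [hj]
        have : (b : ZMod n) = ((b - a : ℕ) : ZMod n) + (a : ZMod n) := by
          rw [← Nat.cast_add]
          congr 1
          omega
        rw [this]
        ring
      rw [heq] at hvS2
      have : i + ((b - a : ℕ) : ZMod n) ∈ S1 := hseg (b - a) (by omega)
      exact (Finset.disjoint_left.mp hdisj this) hvS2
    rw [Finset.mem_sdiff]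
    constructor
    · rw [circInNbrs, Finset.mem_image]
      refine ⟨a - b, ?_, ?_⟩
      · simp only [Finset.mem_Icc]; omega
      · rw [hj]
        have : (a : ZMod n) = ((a - b : ℕ) : ZMod n) + (b : ZMod n) := by
          rw [← Nat.cast_add]; congr 1; omega
        rw [this]; ring
    · exact fun hv1 => (Finset.disjoint_left.mp hdisj hv1) hvS2
  -- counting
  have hsub : T ⊆ (T ∩ S1) ∪ (T ∩ S2) := by
    intro v hv
    rcases hcover v with h | h
    · exact Finset.mem_union_left _ (Finset.mem_inter.mpr ⟨hv, h⟩)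
    · exact Finset.mem_union_right _ (Finset.mem_inter.mpr ⟨hv, h⟩)
  have hk' : k ≤ (T ∩ S1).card + (T ∩ S2).card := by
    calc k = T.card := hTcard.symm
    _ ≤ ((T ∩ S1) ∪ (T ∩ S2)).card := Finset.card_le_card hsub
    _ ≤ (T ∩ S1).card + (T ∩ S2).card := Finset.card_union_le _ _
  have c1 : (T ∩ S1).card ≤ (T \ S2).card := Finset.card_le_card h1
  have c2 : (T ∩ S2).card ≤ (circInNbrs n k i \ S1).card := Finset.card_le_card h2
  have e1 : ((T \ S2).card : ℤ) ≤ (σ : ℤ) - 1 := hsmall2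
  have e2 : ((circInNbrs n k i \ S1).card : ℤ) ≤ (σ : ℤ) - 1 := hsmall1
  have := Int.ofNat_le.mpr hk'
  push_cast at this e1 e2 ⊢
  omega
end
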